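/- Fix an integer n ≥ 2, a finite nonempty set D of positive reals, and weights A_δ ≥ 0 for δ ∈ D with Σ_{δ ∈ D} A_δ > 2. Define f_u(r) = Σ_{δ ∈ D} A_δ p₂(r, δ) for r > 0, where p₂(r, δ) = (Γ(n/2)/(√π Γ((n−1)/2))) ∫_0^{arccos(δ/(2r))} sin^{n−2} φ dφ for r > δ/2 and p₂(r, δ) = 0 for 0 < r ≤ δ/2. Then there exists a unique r₁ ∈ (min(D)/2, ∞) such that f_u(r₁) = 1. -/

import Mathlib

open MeasureTheory

/-- The conditional pair-wise error probability of the sphere bound: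
`p₂(r, δ) = (Γ(n/2)/(√π Γ((n-1)/2))) ∫_0^{arccos(δ/(2r))} sin^{n-2} φ dφ` for
`r > δ/2`, and `p₂(r, δ) = 0` for `r ≤ δ/2`. -/
noncomputable def spherePairwise (n : ℕ) (r δ : ℝ) : ℝ :=
  if δ / 2 < r then
    (Real.Gamma ((n : ℝ) / 2) /
        (Real.sqrt Real.pi * Real.Gamma (((n : ℝ) - 1) / 2))) *
      ∫ φ in (0 : ℝ)..Real.arccos (δ / (2 * r)), Real.sin φ ^ (n - 2)
  else 0

/-! ### Auxiliary definitions and lemmas -/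

/-- The primitive of `sin ^ k` based at `0`. -/
noncomputable def sinPowPrim (k : ℕ) (t : ℝ) : ℝ := ∫ x in (0 : ℝ)..t, Real.sin x ^ k

lemma sinPow_intervalIntegrable (k : ℕ) (a b : ℝ) :
    IntervalIntegrable (fun x => Real.sin x ^ k) volume a b :=
  (Real.continuous_sin.pow k).intervalIntegrable a b

lemma continuous_sinPowPrim (k : ℕ) : Continuous (sinPowPrim k) :=
  intervalIntegral.continuous_primitive (sinPow_intervalIntegrable k) 0

lemma sinPowPrim_zero (k : ℕ) : sinPowPrim k 0 = 0 := by
  simp [sinPowPrim]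

lemma sinPowPrim_add (k : ℕ) (s t : ℝ) :
    sinPowPrim k s + ∫ x in s..t, Real.sin x ^ k = sinPowPrim k t :=
  intervalIntegral.integral_add_adjacent_intervals
    (sinPow_intervalIntegrable k 0 s) (sinPow_intervalIntegrable k s t)

lemma sinPowPrim_mono (k : ℕ) {s t : ℝ} (hs : 0 ≤ s) (hst : s ≤ t) (ht : t ≤ Real.pi) :
    sinPowPrim k s ≤ sinPowPrim k t := by
  have h := sinPowPrim_add k s t
  have hnn : 0 ≤ ∫ x in s..t, Real.sin x ^ k := by
    apply intervalIntegral.integral_nonneg hst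
    intro u hu
    exact pow_nonneg (Real.sin_nonneg_of_nonneg_of_le_pi (hs.trans hu.1) (hu.2.trans ht)) k
  linarith

lemma sinPowPrim_strictMono (k : ℕ) {s t : ℝ} (hs : 0 ≤ s) (hst : s < t) (ht : t ≤ Real.pi) :
    sinPowPrim k s < sinPowPrim k t := by
  have h := sinPowPrim_add k s t
  have hpos : 0 < ∫ x in s..t, Real.sin x ^ k := by
    apply intervalIntegral.intervalIntegral_pos_of_pos_on (sinPow_intervalIntegrable k s t) _ hst
    intro u hu
    exact pow_pos (Real.sin_pos_of_pos_of_lt_pi (lt_of_le_of_lt hs hu.1) (lt_of_lt_of_le hu.2 ht)) k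
  linarith

lemma arccos_antitone : Antitone Real.arccos := fun x y h => by
  simp only [Real.arccos]
  linarith [Real.monotone_arcsin h]

/-- The sin-power half-integral in terms of the Gamma function. -/
lemma sinPow_half_integral (m : ℕ) :
    sinPowPrim m (Real.pi / 2) =
      Real.sqrt Real.pi * Real.Gamma (((m : ℝ) + 1) / 2) /
        (2 * Real.Gamma ((m : ℝ) / 2 + 1)) := by
  induction m using Nat.strong_induction_on with
  | _ m ih =>
    match m with
    | 0 =>
      simp only [sinPowPrim, pow_zero, intervalIntegral.integral_const, smul_eq_mul,
        mul_one, sub_zero, Nat.cast_zero]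
      rw [show ((0 : ℝ) + 1) / 2 = 1 / 2 by ring, Real.Gamma_one_half_eq,
        show (0 : ℝ) / 2 + 1 = 1 by ring, Real.Gamma_one]
      linear_combination -(Real.mul_self_sqrt Real.pi_pos.le) / 2
    | 1 =>
      simp only [sinPowPrim, pow_one, integral_sin, Real.cos_zero, Real.cos_pi_div_two,
        Nat.cast_one]
      have h32 : Real.Gamma ((1 : ℝ) / 2 + 1) = (1 / 2) * Real.Gamma (1 / 2) :=
        Real.Gamma_add_one (by norm_num)
      rw [show ((1 : ℝ) + 1) / 2 = 1 by ring, Real.Gamma_one, h32, Real.Gamma_one_half_eq]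
      have hπ : (0 : ℝ) < Real.sqrt Real.pi := Real.sqrt_pos.mpr Real.pi_pos
      field_simp
      norm_num
    | (k + 2) =>
      have ihk := ih k (by omega)
      have h := integral_sin_pow (a := 0) (b := Real.pi / 2) (n := k)
      rw [Real.sin_zero, Real.cos_pi_div_two] at h
      simp only [zero_pow (Nat.succ_ne_zero k), zero_mul, mul_zero, sub_zero, zero_div,
        zero_add] at h
      have hint : sinPowPrim (k + 2) (Real.pi / 2) =
          ((k : ℝ) + 1) / ((k : ℝ) + 2) * sinPowPrim k (Real.pi / 2) := h
      rw [hint, ihk]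
      have h1 : Real.Gamma (((k : ℝ) + 2 + 1) / 2) =
          (((k : ℝ) + 1) / 2) * Real.Gamma (((k : ℝ) + 1) / 2) := by
        rw [show ((k : ℝ) + 2 + 1) / 2 = ((k : ℝ) + 1) / 2 + 1 by ring,
          Real.Gamma_add_one (by positivity)]
      have h2 : Real.Gamma (((k : ℝ) + 2) / 2 + 1) =
          ((k : ℝ) / 2 + 1) * Real.Gamma ((k : ℝ) / 2 + 1) := by
        rw [show ((k : ℝ) + 2) / 2 + 1 = ((k : ℝ) / 2 + 1) + 1 by ring,
          Real.Gamma_add_one (by positivity)]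
      push_cast
      rw [h1, h2]
      have hΓ : (0 : ℝ) < Real.Gamma ((k : ℝ) / 2 + 1) := Real.Gamma_pos_of_pos (by positivity)
      have hk2 : ((k : ℝ) + 2) ≠ 0 := by positivity
      field_simp

/-- Auxiliary "smooth" version of `spherePairwise`, valid for all `r > 0`. -/
noncomputable def gAux (n : ℕ) (r δ : ℝ) : ℝ :=
  (Real.Gamma ((n : ℝ) / 2) / (Real.sqrt Real.pi * Real.Gamma (((n : ℝ) - 1) / 2))) *
    sinPowPrim (n - 2) (Real.arccos (δ / (2 * r)))

lemma gAux_const_pos (n : ℕ) (hn : 2 ≤ n) :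
    0 < Real.Gamma ((n : ℝ) / 2) / (Real.sqrt Real.pi * Real.Gamma (((n : ℝ) - 1) / 2)) := by
  have h2 : (2 : ℝ) ≤ (n : ℝ) := by exact_mod_cast hn
  apply div_pos (Real.Gamma_pos_of_pos (by positivity))
  exact mul_pos (Real.sqrt_pos.mpr Real.pi_pos) (Real.Gamma_pos_of_pos (by linarith))

lemma spherePairwise_eq_gAux (n : ℕ) {r : ℝ} (hr : 0 < r) (δ : ℝ) :
    spherePairwise n r δ = gAux n r δ := by
  rw [spherePairwise, gAux, sinPowPrim]
  split_ifs with h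
  · rfl
  · push_neg at h
    have h1 : (1 : ℝ) ≤ δ / (2 * r) := by
      rw [le_div_iff₀ (by positivity)]; linarith
    rw [Real.arccos_eq_zero.mpr h1, intervalIntegral.integral_same, mul_zero]

lemma gAux_eq_zero (n : ℕ) {r δ : ℝ} (hr : 0 < r) (hδ : 2 * r ≤ δ) : gAux n r δ = 0 := by
  have h1 : (1 : ℝ) ≤ δ / (2 * r) := by
    rw [le_div_iff₀ (by positivity)]; linarith
  rw [gAux, Real.arccos_eq_zero.mpr h1, sinPowPrim_zero, mul_zero]

lemma gAux_mono (n : ℕ) (hn : 2 ≤ n) {r s δ : ℝ} (hr : 0 < r) (hrs : r ≤ s) (hδ : 0 < δ) :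
    gAux n r δ ≤ gAux n s δ := by
  have hs : 0 < s := lt_of_lt_of_le hr hrs
  have hx : δ / (2 * s) ≤ δ / (2 * r) := by
    rw [div_le_div_iff₀ (by positivity) (by positivity)]
    nlinarith
  have ht := arccos_antitone hx
  exact mul_le_mul_of_nonneg_left
    (sinPowPrim_mono _ (Real.arccos_nonneg _) ht (Real.arccos_le_pi _))
    (gAux_const_pos n hn).le

lemma gAux_strictMono (n : ℕ) (hn : 2 ≤ n) {r s δ : ℝ} (hδ : 0 < δ) (hδr : δ / 2 < r)
    (hrs : r < s) : gAux n r δ < gAux n s δ := by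
  have hr : 0 < r := lt_trans (by positivity) hδr
  have hs : 0 < s := lt_trans hr hrs
  have hx1 : δ / (2 * r) < 1 := by
    rw [div_lt_one (by positivity)]; linarith
  have hx2 : 0 < δ / (2 * s) := by positivity
  have hxx : δ / (2 * s) < δ / (2 * r) := by
    rw [div_lt_div_iff₀ (by positivity) (by positivity)]
    nlinarith
  have ht : Real.arccos (δ / (2 * r)) < Real.arccos (δ / (2 * s)) :=
    Real.strictAntiOn_arccos ⟨by linarith, by linarith⟩ ⟨by nlinarith, hx1.le⟩ hxx
  exact mul_lt_mul_of_pos_left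
    (sinPowPrim_strictMono _ (Real.arccos_nonneg _) ht (Real.arccos_le_pi _))
    (gAux_const_pos n hn)

/-- The limiting value of `gAux` at infinity equals `1/2`. -/
lemma gAux_limit_value (n : ℕ) (hn : 2 ≤ n) :
    (Real.Gamma ((n : ℝ) / 2) / (Real.sqrt Real.pi * Real.Gamma (((n : ℝ) - 1) / 2))) *
      sinPowPrim (n - 2) (Real.pi / 2) = 1 / 2 := by
  obtain ⟨m, rfl⟩ : ∃ m, n = m + 2 := ⟨n - 2, by omega⟩
  rw [show m + 2 - 2 = m from rfl, sinPow_half_integral m]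
  have h1 : ((m + 2 : ℕ) : ℝ) / 2 = (m : ℝ) / 2 + 1 := by push_cast; ring
  have h2 : (((m + 2 : ℕ) : ℝ) - 1) / 2 = ((m : ℝ) + 1) / 2 := by push_cast; ring
  rw [h1, h2]
  have hπ : (0 : ℝ) < Real.sqrt Real.pi := Real.sqrt_pos.mpr Real.pi_pos
  have hΓ1 : (0 : ℝ) < Real.Gamma ((m : ℝ) / 2 + 1) := Real.Gamma_pos_of_pos (by positivity)
  have hΓ2 : (0 : ℝ) < Real.Gamma (((m : ℝ) + 1) / 2) := Real.Gamma_pos_of_pos (by positivity)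
  field_simp

/-- **Existence and uniqueness of the optimal radius of the sphere bound.**
For a code with Euclidean distance spectrum `{A_δ}_{δ ∈ D}` (a finite nonempty
set of positive distances, nonnegative weights with `Σ_δ A_δ > 2`), the
conditional union bound `f_u(r) = Σ_{δ ∈ D} A_δ p₂(r, δ)` takes the value `1`
at a unique radius `r₁ ∈ (min(D)/2, ∞)`. -/
theorem sphere_bound_optimal_radius_exists_unique
    (n : ℕ) (hn : 2 ≤ n)
    (D : Finset ℝ) (hD : D.Nonempty) (hDpos : ∀ δ ∈ D, 0 < δ)
    (A : ℝ → ℝ) (hA : ∀ δ ∈ D, 0 ≤ A δ) (hsum : 2 < ∑ δ ∈ D, A δ) :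
    ∃! r₁ : ℝ, r₁ ∈ Set.Ioi (D.min' hD / 2) ∧
      ∑ δ ∈ D, A δ * spherePairwise n r₁ δ = 1 := by
  set δ₀ := D.min' hD with hδ₀def
  have hδ₀pos : 0 < δ₀ := hDpos _ (D.min'_mem hD)
  set m : ℝ := δ₀ / 2 with hmdef
  have hm : 0 < m := by positivity
  set F' : ℝ → ℝ := fun r => ∑ δ ∈ D, A δ * gAux n r δ with hF'def
  -- rewriting the sum in terms of `gAux`
  have hFg : ∀ r : ℝ, 0 < r → (∑ δ ∈ D, A δ * spherePairwise n r δ) = F' r := by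
    intro r hr
    exact Finset.sum_congr rfl fun δ _ => by rw [spherePairwise_eq_gAux n hr δ]
  -- F' m = 0
  have hF'm : F' m = 0 := by
    apply Finset.sum_eq_zero
    intro δ hδ
    have hmin : δ₀ ≤ δ := D.min'_le δ hδ
    rw [gAux_eq_zero n hm (by rw [hmdef]; linarith), mul_zero]
  -- continuity of F' on [m, ∞)
  have hF'cont : ContinuousOn F' (Set.Ici m) := by
    apply continuousOn_finset_sum
    intro δ _
    apply continuousOn_const.mul
    apply continuousOn_const.mul
    have hdiv : ContinuousOn (fun r : ℝ => δ / (2 * r)) (Set.Ici m) := by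
      apply continuousOn_const.div ((continuous_const.mul continuous_id').continuousOn)
      intro x hx
      have hx' : (0 : ℝ) < x := lt_of_lt_of_le hm hx
      exact ne_of_gt (by show (0 : ℝ) < 2 * x; linarith)
    exact (((continuous_sinPowPrim (n - 2)).comp Real.continuous_arccos).comp_continuousOn hdiv)
  -- limit of F' at infinity
  have hhalf : ∀ δ : ℝ,
      A δ * ((Real.Gamma ((n : ℝ) / 2) / (Real.sqrt Real.pi * Real.Gamma (((n : ℝ) - 1) / 2))) *
        sinPowPrim (n - 2) (Real.pi / 2)) = A δ * (1 / 2) := fun δ => by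
    rw [gAux_limit_value n hn]
  have hlim : Filter.Tendsto F' Filter.atTop
      (nhds (∑ δ ∈ D, A δ * (1 / 2))) := by
    apply tendsto_finset_sum
    intro δ _
    rw [← hhalf δ]
    simp only [gAux]
    apply Filter.Tendsto.const_mul
    apply Filter.Tendsto.const_mul
    apply ((continuous_sinPowPrim (n - 2)).tendsto _).comp
    have hdiv : Filter.Tendsto (fun r : ℝ => δ / (2 * r)) Filter.atTop (nhds 0) :=
      Filter.Tendsto.div_atTop tendsto_const_nhds
        (Filter.Tendsto.const_mul_atTop two_pos Filter.tendsto_id)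
    have harc := (Real.continuous_arccos.tendsto 0).comp hdiv
    rw [Real.arccos_zero] at harc
    exact harc
  have hL : 1 < ∑ δ ∈ D, A δ * (1 / 2) := by
    rw [← Finset.sum_mul]
    linarith
  -- find R with F' R > 1
  obtain ⟨R, hR1, hR2⟩ :=
    ((hlim.eventually_const_lt hL).and (Filter.eventually_ge_atTop (m + 1))).exists
  have hmR : m ≤ R := by linarith
  -- intermediate value theorem
  obtain ⟨r₁, hr₁mem, hr₁⟩ :=
    intermediate_value_Icc hmR (hF'cont.mono Set.Icc_subset_Ici_self)
      (Set.mem_Icc.mpr ⟨by rw [hF'm]; norm_num, hR1.le⟩)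
  have hr₁m : m < r₁ := by
    rcases lt_or_eq_of_le hr₁mem.1 with h | h
    · exact h
    · exfalso; rw [← h, hF'm] at hr₁; norm_num at hr₁
  have hr₁pos : 0 < r₁ := hm.trans hr₁m
  -- strict increase past any root
  have key : ∀ a b : ℝ, 0 < a → a < b → F' a = 1 → 1 < F' b := by
    intro a b ha hab hFa
    have hb : 0 < b := ha.trans hab
    obtain ⟨δ, hδD, hδpos⟩ : ∃ δ ∈ D, 0 < A δ * gAux n a δ := by
      by_contra hcon
      push_neg at hcon
      have h0 : F' a ≤ 0 := Finset.sum_nonpos hcon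
      rw [hFa] at h0
      linarith
    have hAδ : 0 < A δ := by
      rcases lt_or_eq_of_le (hA δ hδD) with h | h
      · exact h
      · exfalso; rw [← h, zero_mul] at hδpos; linarith
    have hgδ : 0 < gAux n a δ := by
      by_contra h
      push_neg at h
      nlinarith
    have hδhalf : δ / 2 < a := by
      by_contra hle
      push_neg at hle
      rw [gAux_eq_zero n ha (by linarith)] at hgδ
      linarith
    rw [← hFa]
    apply Finset.sum_lt_sum
    · intro i hi
      exact mul_le_mul_of_nonneg_left (gAux_mono n hn ha hab.le (hDpos i hi)) (hA i hi)
    · exact ⟨δ, hδD, mul_lt_mul_of_pos_left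
        (gAux_strictMono n hn (hDpos δ hδD) hδhalf hab) hAδ⟩
  refine ⟨r₁, ⟨Set.mem_Ioi.mpr hr₁m, by rw [hFg r₁ hr₁pos]; exact hr₁⟩, ?_⟩
  rintro s ⟨hsm, hsF⟩
  have hsm' : m < s := hsm
  have hspos : 0 < s := hm.trans hsm'
  rw [hFg s hspos] at hsF
  rcases lt_trichotomy s r₁ with h | h | h
  · exfalso
    have := key s r₁ hspos h hsF
    rw [hr₁] at this
    exact lt_irrefl _ this
  · exact h
  · exfalso
    have := key r₁ s hr₁pos h hr₁
    rw [hsF] at this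
    exact lt_irrefl _ this
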